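/- Let L ∈ (0,1) and b(a) = √2·erf⁻¹(2L + erf((√2/2)a)). The function a ↦ P(a) = (2π)^{-1/2}(e^{-a²/2} + e^{-b(a)²/2}) is strictly increasing on (−∞, −√2·erf⁻¹(L)) and strictly decreasing on (−√2·erf⁻¹(L), √2·erf⁻¹(1−2L)). -/

import Mathlib

open Real

/-- The error function `erf(x) = (2/√π)∫₀ˣ e^{-t²} dt`. -/
noncomputable def erf (x : ℝ) : ℝ :=
  2 / Real.sqrt Real.pi * ∫ t in (0:ℝ)..x, Real.exp (-t ^ 2)

lemma cont_g : Continuous (fun t : ℝ => Real.exp (-t ^ 2)) := by continuity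

lemma intble (a b : ℝ) : IntervalIntegrable (fun t : ℝ => Real.exp (-t ^ 2)) MeasureTheory.volume a b :=
  cont_g.intervalIntegrable a b

lemma erf_sub (x y : ℝ) :
    erf y - erf x = 2 / Real.sqrt Real.pi * ∫ t in x..y, Real.exp (-t ^ 2) := by
  unfold erf
  rw [← mul_sub]
  congr 1
  exact intervalIntegral.integral_interval_sub_left (intble 0 y) (intble 0 x)

lemma two_div_sqrt_pi_pos : 0 < 2 / Real.sqrt Real.pi := by
  positivity

lemma erf_strictMono : StrictMono erf := by
  intro x y hxy
  have h := erf_sub x y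
  have hpos : 0 < ∫ t in x..y, Real.exp (-t ^ 2) := by
    apply intervalIntegral.intervalIntegral_pos_of_pos_on (intble x y)
    · intro t _; positivity
    · exact hxy
  nlinarith [two_div_sqrt_pi_pos]

lemma integral_pos_imp_lt {u v : ℝ} (h : 0 < ∫ t in u..v, Real.exp (-t ^ 2)) : u < v := by
  by_contra hvu
  push_neg at hvu
  rw [intervalIntegral.integral_symm] at h
  have := intervalIntegral.integral_nonneg (μ := MeasureTheory.volume)
    (f := fun t : ℝ => Real.exp (-t^2)) hvu (fun t _ => (Real.exp_pos _).le)
  linarith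

lemma erf_neg (x : ℝ) : erf (-x) = - erf x := by
  unfold erf
  rw [← mul_neg]
  congr 1
  have h := intervalIntegral.integral_comp_neg (a := 0) (b := x) (fun t : ℝ => Real.exp (-t ^ 2))
  simp only [neg_sq, neg_zero] at h
  calc (∫ t in (0:ℝ)..(-x), Real.exp (-t ^ 2)) = -∫ t in (-x)..(0:ℝ), Real.exp (-t ^ 2) :=
        intervalIntegral.integral_symm _ _
    _ = -∫ t in (0:ℝ)..x, Real.exp (-t ^ 2) := by rw [h]

lemma integral_neg_interval (u v : ℝ) :
    (∫ t in (-v)..(-u), Real.exp (-t ^ 2)) = ∫ t in u..v, Real.exp (-t ^ 2) := by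
  have := intervalIntegral.integral_comp_neg (a := u) (b := v) (fun t : ℝ => Real.exp (-t ^ 2))
  simp only [neg_sq] at this
  exact this.symm

lemma ftc_key (x y : ℝ) :
    (∫ t in x..y, 2 * t * Real.exp (-t ^ 2)) = Real.exp (-x ^ 2) - Real.exp (-y ^ 2) := by
  have h : ∀ t ∈ Set.uIcc x y, HasDerivAt (fun s : ℝ => -Real.exp (-s ^ 2))
      (2 * t * Real.exp (-t ^ 2)) t := by
    intro t _
    have h1 : HasDerivAt (fun s : ℝ => -s ^ 2) (-(2 * t)) t := by
      have := (hasDerivAt_pow 2 t).neg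
      exact this.congr_deriv (by ring)
    have h2 := (h1.exp).neg
    exact h2.congr_deriv (by ring)
  have hint : IntervalIntegrable (fun t : ℝ => 2 * t * Real.exp (-t ^ 2)) MeasureTheory.volume x y :=
    (by continuity : Continuous fun t : ℝ => 2 * t * Real.exp (-t ^ 2)).intervalIntegrable x y
  rw [intervalIntegral.integral_eq_sub_of_hasDerivAt h hint]
  ring

lemma core {x₁ x₂ u₁ u₂ : ℝ} (hx : x₁ < x₂) (hu : u₁ < u₂)
    (hint : (∫ t in x₁..x₂, Real.exp (-t ^ 2)) = ∫ t in u₁..u₂, Real.exp (-t ^ 2))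
    (hlt : x₂ < -u₂) :
    Real.exp (-x₁ ^ 2) + Real.exp (-u₁ ^ 2) < Real.exp (-x₂ ^ 2) + Real.exp (-u₂ ^ 2) := by
  set M := ∫ t in x₁..x₂, Real.exp (-t ^ 2) with hM
  have hMpos : 0 < M := by
    apply intervalIntegral.intervalIntegral_pos_of_pos_on (intble x₁ x₂)
    · intro t _; positivity
    · exact hx
  have hA : Real.exp (-x₁ ^ 2) - Real.exp (-x₂ ^ 2) ≤ 2 * x₂ * M := by
    rw [← ftc_key]
    calc (∫ t in x₁..x₂, 2 * t * Real.exp (-t ^ 2))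
        ≤ ∫ t in x₁..x₂, 2 * x₂ * Real.exp (-t ^ 2) := by
          apply intervalIntegral.integral_mono_on hx.le
            ((by continuity : Continuous fun t : ℝ => 2 * t * Real.exp (-t ^ 2)).intervalIntegrable x₁ x₂)
            ((by continuity : Continuous fun t : ℝ => 2 * x₂ * Real.exp (-t ^ 2)).intervalIntegrable x₁ x₂)
          intro t ht
          have := Real.exp_pos (-t ^ 2)
          nlinarith [ht.2]
      _ = 2 * x₂ * M := by rw [intervalIntegral.integral_const_mul]
  have hB : -(2 * u₂) * M ≤ Real.exp (-u₂ ^ 2) - Real.exp (-u₁ ^ 2) := by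
    have h1 : Real.exp (-u₂ ^ 2) - Real.exp (-u₁ ^ 2)
        = ∫ t in u₁..u₂, -(2 * t) * Real.exp (-t ^ 2) := by
      have : (∫ t in u₁..u₂, -(2 * t) * Real.exp (-t ^ 2))
          = -∫ t in u₁..u₂, 2 * t * Real.exp (-t ^ 2) := by
        rw [← intervalIntegral.integral_neg]; congr 1; ext t; ring
      rw [this, ftc_key]; ring
    rw [h1]
    calc -(2 * u₂) * M = ∫ t in u₁..u₂, -(2 * u₂) * Real.exp (-t ^ 2) := by
          rw [intervalIntegral.integral_const_mul, hint]
      _ ≤ ∫ t in u₁..u₂, -(2 * t) * Real.exp (-t ^ 2) := by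
          apply intervalIntegral.integral_mono_on hu.le
            ((by continuity : Continuous fun t : ℝ => -(2 * u₂) * Real.exp (-t ^ 2)).intervalIntegrable u₁ u₂)
            ((by continuity : Continuous fun t : ℝ => -(2 * t) * Real.exp (-t ^ 2)).intervalIntegrable u₁ u₂)
          intro t ht
          have := Real.exp_pos (-t ^ 2)
          nlinarith [ht.2]
  nlinarith

/-- For intervals `(a, b(a))` of fixed Gaussian measure `L ∈ (0,1)`
(encoded by `erf(b/√2) = 2L + erf((√2/2)a)`), the Gaussian perimeter
`P(a) = (2π)^{-1/2}(e^{-a²/2} + e^{-b(a)²/2})` is strictly increasing on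
`(−∞, −√2 erf⁻¹(L))` and strictly decreasing on
`(−√2 erf⁻¹(L), √2 erf⁻¹(1−2L))`.  Here `a₀ = −√2 erf⁻¹(L)` is encoded by
`erf(a₀/√2) = −L` and `c = √2 erf⁻¹(1−2L)` by `erf(c/√2) = 1 − 2L`. -/
theorem gaussian_perimeter_monotone (L a₀ c : ℝ) (hL0 : 0 < L) (hL1 : L < 1)
    (ha₀ : erf (a₀ / Real.sqrt 2) = -L) (hc : erf (c / Real.sqrt 2) = 1 - 2 * L) :
    (∀ a₁ b₁ a₂ b₂ : ℝ,
      erf (b₁ / Real.sqrt 2) = 2 * L + erf (Real.sqrt 2 / 2 * a₁) →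
      erf (b₂ / Real.sqrt 2) = 2 * L + erf (Real.sqrt 2 / 2 * a₂) →
      a₁ < a₂ → a₂ < a₀ →
        (2 * Real.pi) ^ (-(1:ℝ)/2) * (Real.exp (-a₁ ^ 2 / 2) + Real.exp (-b₁ ^ 2 / 2)) <
          (2 * Real.pi) ^ (-(1:ℝ)/2) * (Real.exp (-a₂ ^ 2 / 2) + Real.exp (-b₂ ^ 2 / 2))) ∧
    (∀ a₁ b₁ a₂ b₂ : ℝ,
      erf (b₁ / Real.sqrt 2) = 2 * L + erf (Real.sqrt 2 / 2 * a₁) →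
      erf (b₂ / Real.sqrt 2) = 2 * L + erf (Real.sqrt 2 / 2 * a₂) →
      a₀ < a₁ → a₁ < a₂ → a₂ < c →
        (2 * Real.pi) ^ (-(1:ℝ)/2) * (Real.exp (-a₂ ^ 2 / 2) + Real.exp (-b₂ ^ 2 / 2)) <
          (2 * Real.pi) ^ (-(1:ℝ)/2) * (Real.exp (-a₁ ^ 2 / 2) + Real.exp (-b₁ ^ 2 / 2))) := by
  have hs2 : (0:ℝ) < Real.sqrt 2 := Real.sqrt_pos.mpr (by norm_num)
  have hmul : Real.sqrt 2 * Real.sqrt 2 = 2 := Real.mul_self_sqrt (by norm_num)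
  have hconv : ∀ a : ℝ, Real.sqrt 2 / 2 * a = a / Real.sqrt 2 := by
    intro a
    rw [eq_div_iff hs2.ne']
    linear_combination (a / 2) * hmul
  have hexp : ∀ a : ℝ, Real.exp (-a ^ 2 / 2) = Real.exp (-(a / Real.sqrt 2) ^ 2) := by
    intro a
    congr 1
    have h2 : (Real.sqrt 2) ^ 2 = 2 := by rw [sq, hmul]
    rw [div_pow, h2]
    ring
  have hp : 0 < (2 * Real.pi) ^ (-(1:ℝ)/2) :=
    Real.rpow_pos_of_pos (by positivity) _
  have hmono := erf_strictMono
  constructor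
  · intro a₁ b₁ a₂ b₂ hb₁ hb₂ h12 h20
    rw [hconv] at hb₁ hb₂
    have hα : a₁ / Real.sqrt 2 < a₂ / Real.sqrt 2 := by gcongr
    have hα20 : a₂ / Real.sqrt 2 < a₀ / Real.sqrt 2 := by gcongr
    have hdiff : erf (b₂ / Real.sqrt 2) - erf (b₁ / Real.sqrt 2)
        = erf (a₂ / Real.sqrt 2) - erf (a₁ / Real.sqrt 2) := by rw [hb₁, hb₂]; ring
    rw [erf_sub, erf_sub] at hdiff
    have hinteq : (∫ t in (a₁ / Real.sqrt 2)..(a₂ / Real.sqrt 2), Real.exp (-t ^ 2))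
        = ∫ t in (b₁ / Real.sqrt 2)..(b₂ / Real.sqrt 2), Real.exp (-t ^ 2) :=
      (mul_left_cancel₀ two_div_sqrt_pi_pos.ne' hdiff).symm
    have hMpos : 0 < ∫ t in (a₁ / Real.sqrt 2)..(a₂ / Real.sqrt 2), Real.exp (-t ^ 2) := by
      apply intervalIntegral.intervalIntegral_pos_of_pos_on (intble _ _) _ hα
      intro t _; positivity
    have hβ : b₁ / Real.sqrt 2 < b₂ / Real.sqrt 2 :=
      integral_pos_imp_lt (hinteq ▸ hMpos)
    have hkey : a₂ / Real.sqrt 2 < -(b₂ / Real.sqrt 2) := by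
      rw [← hmono.lt_iff_lt, erf_neg]
      have h1 : erf (a₂ / Real.sqrt 2) < erf (a₀ / Real.sqrt 2) := hmono hα20
      rw [ha₀] at h1
      linarith [hb₂]
    have hcore := core hα hβ hinteq hkey
    rw [hexp a₁, hexp b₁, hexp a₂, hexp b₂]
    exact mul_lt_mul_of_pos_left hcore hp
  · intro a₁ b₁ a₂ b₂ hb₁ hb₂ h01 h12 h2c
    rw [hconv] at hb₁ hb₂
    have hα : a₁ / Real.sqrt 2 < a₂ / Real.sqrt 2 := by gcongr
    have hα01 : a₀ / Real.sqrt 2 < a₁ / Real.sqrt 2 := by gcongr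
    have hdiff : erf (b₂ / Real.sqrt 2) - erf (b₁ / Real.sqrt 2)
        = erf (a₂ / Real.sqrt 2) - erf (a₁ / Real.sqrt 2) := by rw [hb₁, hb₂]; ring
    rw [erf_sub, erf_sub] at hdiff
    have hinteq : (∫ t in (a₁ / Real.sqrt 2)..(a₂ / Real.sqrt 2), Real.exp (-t ^ 2))
        = ∫ t in (b₁ / Real.sqrt 2)..(b₂ / Real.sqrt 2), Real.exp (-t ^ 2) :=
      (mul_left_cancel₀ two_div_sqrt_pi_pos.ne' hdiff).symm
    have hMpos : 0 < ∫ t in (a₁ / Real.sqrt 2)..(a₂ / Real.sqrt 2), Real.exp (-t ^ 2) := by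
      apply intervalIntegral.intervalIntegral_pos_of_pos_on (intble _ _) _ hα
      intro t _; positivity
    have hβ : b₁ / Real.sqrt 2 < b₂ / Real.sqrt 2 :=
      integral_pos_imp_lt (hinteq ▸ hMpos)
    -- apply core with x = (-(b₂/√2), -(b₁/√2)), u = (-(a₂/√2), -(a₁/√2))
    have hx : -(b₂ / Real.sqrt 2) < -(b₁ / Real.sqrt 2) := by linarith
    have hu : -(a₂ / Real.sqrt 2) < -(a₁ / Real.sqrt 2) := by linarith
    have hint2 : (∫ t in (-(b₂ / Real.sqrt 2))..(-(b₁ / Real.sqrt 2)), Real.exp (-t ^ 2))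
        = ∫ t in (-(a₂ / Real.sqrt 2))..(-(a₁ / Real.sqrt 2)), Real.exp (-t ^ 2) := by
      rw [integral_neg_interval, integral_neg_interval, hinteq]
    have hkey : -(b₁ / Real.sqrt 2) < -(-(a₁ / Real.sqrt 2)) := by
      rw [neg_neg, ← hmono.lt_iff_lt, erf_neg]
      have h1 : erf (a₀ / Real.sqrt 2) < erf (a₁ / Real.sqrt 2) := hmono hα01
      rw [ha₀] at h1
      linarith [hb₁]
    have hcore := core hx hu hint2 hkey
    simp only [neg_neg, neg_sq] at hcore
    rw [hexp a₁, hexp b₁, hexp a₂, hexp b₂]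
    apply mul_lt_mul_of_pos_left _ hp
    linarith
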